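/- Let N ≥ 1, let S ⊆ ℝ^N be compact, let h ∈ B_S, and let D ⊆ ℝ^N be a bounded measurable set with nonempty interior. Define the sequence f_0 = P_S(χ_D h) and f_{k+1} = T_h^{(D)} f_k for k ≥ 0. Then f_k converges strongly to h in L²(ℝ^N), i.e., ‖f_k − h‖ → 0 as k → ∞. -/

import Mathlib

open MeasureTheory FourierTransform Filter

noncomputable section

/-- The Hilbert space `L²(ℝᴺ; ℂ)` of square-integrable functions on `ℝᴺ`. -/
abbrev L2Space (N : ℕ) : Type :=
  Lp ℂ 2 (volume : Measure (EuclideanSpace ℝ (Fin N)))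

/-- `f ∈ L²(ℝᴺ)` is bandlimited to `S`: its Fourier transform vanishes (a.e.) outside `S`;
equivalently, `f` agrees a.e. with the inverse Fourier transform of an integrable function `F`
vanishing outside `S`. -/
def IsBandlimited {N : ℕ} (S : Set (EuclideanSpace ℝ (Fin N))) (f : L2Space N) : Prop :=
  ∃ F : EuclideanSpace ℝ (Fin N) → ℂ,
    Integrable F ∧ (∀ k, k ∉ S → F k = 0) ∧
      (f : EuclideanSpace ℝ (Fin N) → ℂ) =ᵐ[volume] 𝓕⁻ F

/-- Multiplication of `f ∈ L²` by the indicator function `χ_D`, as an element of `L²`. -/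
def chiMul {N : ℕ} {D : Set (EuclideanSpace ℝ (Fin N))} (hD : MeasurableSet D)
    (f : L2Space N) : L2Space N :=
  ((Lp.memLp f).indicator hD).toLp (D.indicator f)

/-- The orthogonal projection of `L²(ℝᴺ)` onto a closed subspace `K`. -/
def projOf {N : ℕ} (K : Submodule ℂ (L2Space N)) (hK : IsClosed (K : Set (L2Space N))) :
    L2Space N → L2Space N :=
  haveI : CompleteSpace K := hK.completeSpace_coe
  fun f => (K.orthogonalProjectionOnto f : L2Space N)

/-- The operator `T_h^{(D)} f = P_S (f + χ_D (h − f))` (single region). -/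
def Tsingle {N : ℕ} (K : Submodule ℂ (L2Space N)) (hK : IsClosed (K : Set (L2Space N)))
    {D : Set (EuclideanSpace ℝ (Fin N))} (hD : MeasurableSet D)
    (h f : L2Space N) : L2Space N :=
  projOf K hK (f + chiMul hD (h - f))


open Complex Real
open scoped InnerProductSpace RealInnerProductSpace Topology

section Aux


lemma iter_cauchySeq {E : Type*} [NormedAddCommGroup E] [InnerProductSpace ℂ E]
    (x : ℕ → E)
    (hsym : ∀ n m, ⟪x (n+1), x m⟫_ℂ = ⟪x n, x (m+1)⟫_ℂ)
    (hdec : ∀ n, ‖x (n+1)‖ ≤ ‖x n‖)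
    (hquad : ∀ n, ‖x (n+1)‖^2 ≤ RCLike.re ⟪x (n+1), x n⟫_ℂ) :
    CauchySeq x := by
  set b : ℕ → ℝ := fun n => ‖x n‖ ^ 2 with hb
  have hbanti : Antitone b := antitone_nat_of_succ_le fun n => by
    have := hdec n
    simp only [hb]
    nlinarith [norm_nonneg (x (n+1))]
  have hbdd : BddBelow (Set.range b) := ⟨0, by rintro y ⟨n, rfl⟩; positivity⟩
  set L : ℝ := ⨅ n, b n with hL
  have hbL : Tendsto b atTop (nhds L) := tendsto_atTop_ciInf hbanti hbdd
  have hLle : ∀ n, L ≤ b n := fun n => ciInf_le hbdd n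
  -- shift lemma
  have shift : ∀ j n m, ⟪x (n + j), x m⟫_ℂ = ⟪x n, x (m + j)⟫_ℂ := by
    intro j
    induction j with
    | zero => simp
    | succ j ih =>
      intro n m
      have h1 : n + (j + 1) = (n + 1) + j := by omega
      rw [h1, ih (n+1) m, hsym n (m + j), show m + j + 1 = m + (j+1) by omega]
  have klow : ∀ n m, n ≤ m → L ≤ RCLike.re ⟪x n, x m⟫_ℂ := by
    intro n m hnm
    rcases Nat.even_or_odd (m - n) with ⟨r, hr⟩ | ⟨r, hr⟩
    · have hm : m = (n + r) + r := by omega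
      rw [hm, ← shift r n (n + r)]
      rw [inner_self_eq_norm_sq (𝕜 := ℂ)]
      exact hLle (n + r)
    · have hm : m = (n + r) + (r + 1) := by omega
      rw [hm, ← shift (r+1) n (n+r), show n + (r + 1) = (n + r) + 1 by omega]
      exact le_trans (hLle ((n+r)+1)) (hquad (n+r))
  rw [Metric.cauchySeq_iff]
  intro eps heps
  have h4 : (0:ℝ) < eps^2/4 := by positivity
  obtain ⟨K, hK⟩ : ∃ K, b K < L + eps^2/4 := by
    have := (hbL.eventually (eventually_lt_nhds (show L < L + eps^2/4 by linarith))).exists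
    exact this
  refine ⟨K, fun m hm n hn => ?_⟩
  have key : ∀ p q, K ≤ p → p ≤ q → dist (x p) (x q) < eps := by
    intro p q hp hpq
    have h5 : ‖x p - x q‖^2 = b p - 2 * RCLike.re ⟪x p, x q⟫_ℂ + b q := norm_sub_sq _ _
    have h6 : L ≤ RCLike.re ⟪x p, x q⟫_ℂ := klow p q hpq
    have h7 : b p ≤ b K := hbanti hp
    have h8 : b q ≤ b K := hbanti (le_trans hp hpq)
    have h9 : ‖x p - x q‖^2 < eps^2/2 := by linarith
    rw [dist_eq_norm]
    nlinarith [norm_nonneg (x p - x q)]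
  rcases le_total m n with h | h
  · exact key m n hm h
  · rw [dist_comm]; exact key n m hn h



lemma fourierInv_vanish_everywhere {N : ℕ} {S : Set (EuclideanSpace ℝ (Fin N))}
    (hS : IsCompact S) {F : EuclideanSpace ℝ (Fin N) → ℂ} (hF : Integrable F)
    (hsupp : ∀ k, k ∉ S → F k = 0) {x₀ : EuclideanSpace ℝ (Fin N)} {r : ℝ} (hr : 0 < r)
    (hzero : ∀ x ∈ Metric.ball x₀ r, 𝓕⁻ F x = 0) (y : EuclideanSpace ℝ (Fin N)) :
    𝓕⁻ F y = 0 := by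
  obtain ⟨B₀, hB₀⟩ := hS.isBounded.exists_norm_le
  set B : ℝ := max B₀ 0 with hBdef
  have hB : ∀ k ∈ S, ‖k‖ ≤ B := fun k hk => le_trans (hB₀ k hk) (le_max_left _ _)
  have hB0 : (0:ℝ) ≤ B := le_max_right _ _
  set v : EuclideanSpace ℝ (Fin N) := y - x₀ with hv
  set c : EuclideanSpace ℝ (Fin N) → ℝ := fun k => ⟪k, x₀⟫_ℝ with hc
  set d : EuclideanSpace ℝ (Fin N) → ℝ := fun k => ⟪k, v⟫_ℝ with hd
  set φ : ℂ → EuclideanSpace ℝ (Fin N) → ℂ := fun z k =>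
    Complex.exp (2 * π * Complex.I * ((c k : ℂ) + z * (d k : ℂ))) * F k with hφ
  set G : ℂ → ℂ := fun z => ∫ k, φ z k with hG
  have hdbound : ∀ k ∈ S, |d k| ≤ ‖v‖ * B := by
    intro k hk
    calc |d k| = |⟪k, v⟫_ℝ| := rfl
    _ ≤ ‖k‖ * ‖v‖ := abs_real_inner_le_norm _ _
    _ ≤ B * ‖v‖ := by
        have := hB k hk
        have := norm_nonneg v
        nlinarith
    _ = ‖v‖ * B := mul_comm _ _
  have hvB : 0 ≤ ‖v‖ * B := mul_nonneg (norm_nonneg v) hB0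
  -- real part computation
  have hre : ∀ (z : ℂ) k, (2 * π * Complex.I * ((c k : ℂ) + z * (d k : ℂ))).re
      = -(2 * π * (z.im * d k)) := by
    intro z k
    simp [Complex.mul_re, Complex.mul_im, Complex.add_re, Complex.add_im]
    try ring
  -- norm bound for φ
  have hφbound : ∀ (z : ℂ) k, ‖φ z k‖ ≤ Real.exp (2 * π * ‖z‖ * (‖v‖ * B)) * ‖F k‖ := by
    intro z k
    by_cases hk : k ∈ S
    · rw [hφ]
      simp only [norm_mul, Complex.norm_exp, hre]
      have h1 : |z.im| ≤ ‖z‖ := by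
        simpa using Complex.abs_im_le_norm z
      have h2 : |d k| ≤ ‖v‖ * B := hdbound k hk
      have h4 : |z.im * d k| ≤ ‖z‖ * (‖v‖ * B) := by
        rw [abs_mul]
        exact mul_le_mul h1 h2 (abs_nonneg _) (norm_nonneg z)
      have h3 : -(2 * π * (z.im * d k)) ≤ 2 * π * ‖z‖ * (‖v‖ * B) := by
        nlinarith [Real.pi_pos, neg_abs_le (z.im * d k)]
      exact mul_le_mul_of_nonneg_right (Real.exp_le_exp.mpr h3) (norm_nonneg _)
    · simp [hφ, hsupp k hk]
  -- continuity facts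
  have hccont : Continuous c := continuous_id.inner continuous_const
  have hdcont : Continuous d := continuous_id.inner continuous_const
  have hexpcont : ∀ z : ℂ, Continuous fun k =>
      Complex.exp (2 * π * Complex.I * ((c k : ℂ) + z * (d k : ℂ))) := fun z =>
    Complex.continuous_exp.comp (continuous_const.mul
      ((Complex.continuous_ofReal.comp hccont).add
        (continuous_const.mul (Complex.continuous_ofReal.comp hdcont))))
  have hmeas : ∀ z : ℂ, AEStronglyMeasurable (φ z) volume := fun z =>
    ((hexpcont z).aestronglyMeasurable).mul hF.aestronglyMeasurable
  have hInt : ∀ z : ℂ, Integrable (φ z) volume := fun z =>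
    ((hF.norm.const_mul (Real.exp (2 * π * ‖z‖ * (‖v‖ * B)))).mono' (hmeas z)
      (Eventually.of_forall (hφbound z)))
  -- the derivative integrand
  set φ' : ℂ → EuclideanSpace ℝ (Fin N) → ℂ := fun z k =>
    Complex.exp (2 * π * Complex.I * ((c k : ℂ) + z * (d k : ℂ)))
      * (2 * π * Complex.I * (d k : ℂ)) * F k with hφ'
  have hmeas' : ∀ z : ℂ, AEStronglyMeasurable (φ' z) volume := fun z =>
    (((hexpcont z).mul (continuous_const.mul
        (Complex.continuous_ofReal.comp hdcont))).aestronglyMeasurable).mul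
      hF.aestronglyMeasurable
  have hφ'norm : ∀ z k, ‖φ' z k‖ = (2 * π * |d k|) * ‖φ z k‖ := by
    intro z k
    rw [hφ', hφ]
    simp only [norm_mul, Complex.norm_exp, Complex.norm_I,
      Complex.norm_real, Complex.norm_two, Real.norm_eq_abs]
    rw [abs_of_pos Real.pi_pos]
    ring
  have hφ'bound : ∀ z k, ‖φ' z k‖
      ≤ (2 * π * (‖v‖ * B)) * (Real.exp (2 * π * ‖z‖ * (‖v‖ * B)) * ‖F k‖) := by
    intro z k
    by_cases hk : k ∈ S
    · rw [hφ'norm]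
      have h1 : 2 * π * |d k| ≤ 2 * π * (‖v‖ * B) := by
        nlinarith [Real.pi_pos, hdbound k hk]
      exact mul_le_mul h1 (hφbound z k) (norm_nonneg _)
        (by nlinarith [Real.pi_pos])
    · simp [hφ', hsupp k hk]
  have hderiv : ∀ (z : ℂ) k, HasDerivAt (fun w => φ w k) (φ' z k) z := by
    intro z k
    have h1 : HasDerivAt (fun w : ℂ => (c k : ℂ) + w * (d k : ℂ)) ((d k : ℂ)) z := by
      simpa using ((hasDerivAt_id z).mul_const ((d k : ℂ))).const_add ((c k : ℂ))
    have h2 := h1.const_mul (2 * π * Complex.I)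
    have h3 := h2.cexp
    have h4 := h3.mul_const (F k)
    convert h4 using 1
  -- differentiability of G
  have hGderiv : ∀ z₀ : ℂ, HasDerivAt G (∫ k, φ' z₀ k) z₀ := by
    intro z₀
    have key := hasDerivAt_integral_of_dominated_loc_of_deriv_le
      (F := φ) (F' := φ') (x₀ := z₀) (μ := (volume : Measure (EuclideanSpace ℝ (Fin N))))
      (bound := fun k => (2 * π * (‖v‖ * B))
        * (Real.exp (2 * π * (‖z₀‖ + 1) * (‖v‖ * B)) * ‖F k‖))
      (Metric.ball_mem_nhds z₀ zero_lt_one) (Eventually.of_forall hmeas) (hInt z₀) (hmeas' z₀)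
      ?_ ?_ ?_
    · exact key.2
    · refine Eventually.of_forall fun k => fun z hz => ?_
      refine le_trans (hφ'bound z k) ?_
      have hz1 : ‖z‖ ≤ ‖z₀‖ + 1 := by
        have e1 := mem_ball_iff_norm.mp hz
        have e2 := norm_sub_norm_le z z₀
        linarith
      have : Real.exp (2 * π * ‖z‖ * (‖v‖ * B))
          ≤ Real.exp (2 * π * (‖z₀‖ + 1) * (‖v‖ * B)) := by
        apply Real.exp_le_exp.mpr
        have e3 := mul_le_mul_of_nonneg_right hz1 hvB
        nlinarith [Real.pi_pos]
      exact mul_le_mul_of_nonneg_left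
        (mul_le_mul_of_nonneg_right this (norm_nonneg _))
        (mul_nonneg (by positivity) hvB)
    · exact (hF.norm.const_mul _).const_mul _
    · exact Eventually.of_forall fun k => fun z _ => hderiv z k
  have hGdiff : Differentiable ℂ G := fun z => (hGderiv z).differentiableAt
  have hGanalytic : AnalyticOnNhd ℂ G Set.univ :=
    hGdiff.differentiableOn.analyticOnNhd isOpen_univ
  -- G at real points
  have hGt : ∀ t : ℝ, G (t : ℂ) = 𝓕⁻ F (x₀ + t • v) := by
    intro t
    rw [Real.fourierInv_eq']
    refine integral_congr_ae (Eventually.of_forall fun k => ?_)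
    simp only [hφ, smul_eq_mul]
    congr 1
    have hinner : ⟪k, x₀ + t • v⟫_ℝ = c k + t * d k := by
      rw [inner_add_right, real_inner_smul_right]
    rw [hinner]
    push_cast
    ring
  -- zeros of G near 0
  set δ : ℝ := r / (‖v‖ + 1) with hδdef
  have hδ : 0 < δ := div_pos hr (by positivity)
  have hGzero : ∀ t : ℝ, |t| < δ → G (t : ℂ) = 0 := by
    intro t ht
    rw [hGt]
    apply hzero
    rw [Metric.mem_ball, dist_eq_norm]
    have : x₀ + t • v - x₀ = t • v := by abel
    rw [this, norm_smul]
    have h1 : ‖t • v‖ = |t| * ‖v‖ := by rw [norm_smul]; simp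
    have h2 : |t| * ‖v‖ ≤ |t| * (‖v‖ + 1) := by nlinarith [abs_nonneg t]
    have h3 : |t| * (‖v‖ + 1) < δ * (‖v‖ + 1) := by
      apply mul_lt_mul_of_pos_right ht (by positivity)
    have h4 : δ * (‖v‖ + 1) = r := by
      rw [hδdef]; field_simp
    simp only [Real.norm_eq_abs]
    linarith
  have hfreq : ∃ᶠ z in 𝓝[≠] (0 : ℂ), G z = 0 := by
    have htr : Tendsto (fun n : ℕ => (δ / (n + 2) : ℝ)) atTop (nhds 0) := by
      have h0 : Tendsto (fun n : ℕ => ((n : ℝ) + 2)) atTop atTop :=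
        tendsto_atTop_add_const_right _ 2 tendsto_natCast_atTop_atTop
      simpa [div_eq_mul_inv] using h0.inv_tendsto_atTop.const_mul δ
    have htc : Tendsto (fun n : ℕ => ((δ / (n + 2) : ℝ) : ℂ)) atTop (𝓝[≠] (0 : ℂ)) := by
      refine tendsto_nhdsWithin_of_tendsto_nhds_of_eventually_within _ ?_ ?_
      · have h := (Complex.continuous_ofReal.tendsto 0).comp htr
        rw [Complex.ofReal_zero] at h
        exact h
      · refine Eventually.of_forall fun n => ?_
        have hpos : (0:ℝ) < δ / (n + 2) := div_pos hδ (by positivity)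
        simp only [Set.mem_compl_iff, Set.mem_singleton_iff]
        exact Complex.ofReal_ne_zero.mpr (ne_of_gt hpos)
    refine htc.frequently (Frequently.of_forall fun n => ?_)
    apply hGzero
    have hpos : (0:ℝ) < δ / ((n:ℝ) + 2) := div_pos hδ (by positivity)
    rw [abs_of_pos hpos]
    have h2 : (1:ℝ) < (n:ℝ) + 2 := by
      have : (0:ℝ) ≤ (n:ℝ) := Nat.cast_nonneg n
      linarith
    calc δ / ((n:ℝ) + 2) < δ / 1 := by
          apply div_lt_div_of_pos_left hδ one_pos h2
    _ = δ := by ring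
  have hG0 : Set.EqOn G 0 Set.univ :=
    hGanalytic.eqOn_zero_of_preconnected_of_frequently_eq_zero
      isPreconnected_univ (Set.mem_univ (0 : ℂ)) hfreq
  have := hG0 (Set.mem_univ (1 : ℂ))
  have h1 : G ((1:ℝ) : ℂ) = 0 := by simpa using this
  rw [hGt 1] at h1
  simpa [hv] using h1

variable {N : ℕ} {D : Set (EuclideanSpace ℝ (Fin N))} (hD : MeasurableSet D)

lemma coeFn_chiMul (f : L2Space N) :
    (chiMul hD f : EuclideanSpace ℝ (Fin N) → ℂ) =ᵐ[volume] D.indicator f :=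
  MemLp.coeFn_toLp _

lemma inner_chiMul_right (f g : L2Space N) : ⟪f, chiMul hD g⟫_ℂ = ⟪chiMul hD f, chiMul hD g⟫_ℂ := by
  rw [MeasureTheory.L2.inner_def, MeasureTheory.L2.inner_def]
  apply integral_congr_ae
  filter_upwards [coeFn_chiMul hD f, coeFn_chiMul hD g] with a hf hg
  rw [hf, hg]
  by_cases ha : a ∈ D <;> simp [Set.indicator_of_mem, Set.indicator_of_notMem, ha]

lemma inner_chiMul_left (f g : L2Space N) : ⟪chiMul hD f, g⟫_ℂ = ⟪chiMul hD f, chiMul hD g⟫_ℂ := by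
  rw [MeasureTheory.L2.inner_def, MeasureTheory.L2.inner_def]
  apply integral_congr_ae
  filter_upwards [coeFn_chiMul hD f, coeFn_chiMul hD g] with a hf hg
  rw [hf, hg]
  by_cases ha : a ∈ D <;> simp [Set.indicator_of_mem, Set.indicator_of_notMem, ha]

lemma chiMul_sub (f g : L2Space N) : chiMul hD (f - g) = chiMul hD f - chiMul hD g := by
  apply Lp.ext ?_
  filter_upwards [coeFn_chiMul hD (f - g), coeFn_chiMul hD f, coeFn_chiMul hD g,
    Lp.coeFn_sub (chiMul hD f) (chiMul hD g), Lp.coeFn_sub f g] with a h1 h2 h3 h4 h5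
  rw [h1, h4, Pi.sub_apply, h2, h3]
  by_cases ha : a ∈ D
  · rw [Set.indicator_of_mem ha, Set.indicator_of_mem ha, Set.indicator_of_mem ha, h5,
      Pi.sub_apply]
  · simp only [Set.indicator_of_notMem ha, sub_zero]

lemma norm_chiMul_le (f : L2Space N) : ‖chiMul hD f‖ ≤ ‖f‖ := by
  have h1 : (‖chiMul hD f‖ : ℝ) ^ 2 = RCLike.re ⟪chiMul hD f, chiMul hD f⟫_ℂ :=
    norm_sq_eq_re_inner (𝕜 := ℂ) _
  have h2 : ⟪chiMul hD f, chiMul hD f⟫_ℂ = ⟪chiMul hD f, f⟫_ℂ :=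
    (inner_chiMul_left hD f f).symm
  have h3 : ‖chiMul hD f‖ ^ 2 ≤ ‖chiMul hD f‖ * ‖f‖ := by
    rw [h1, h2]
    calc RCLike.re ⟪chiMul hD f, f⟫_ℂ ≤ ‖⟪chiMul hD f, f⟫_ℂ‖ := RCLike.re_le_norm _
    _ ≤ ‖chiMul hD f‖ * ‖f‖ := norm_inner_le_norm _ _
  rcases eq_or_lt_of_le (norm_nonneg (chiMul hD f)) with h | h
  · rw [← h]; exact norm_nonneg f
  · nlinarith [h3]

lemma chiMul_add_compl (f : L2Space N) : chiMul hD f + chiMul hD.compl f = f := by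
  apply Lp.ext ?_
  filter_upwards [coeFn_chiMul hD f, coeFn_chiMul hD.compl f,
    Lp.coeFn_add (chiMul hD f) (chiMul hD.compl f)] with a h1 h2 h3
  rw [h3, Pi.add_apply, h1, h2]
  by_cases ha : a ∈ D
  · rw [Set.indicator_of_mem ha, Set.indicator_of_notMem (by simp [ha]), add_zero]
  · rw [Set.indicator_of_notMem ha, Set.indicator_of_mem (by simp [ha]), zero_add]

lemma pythagoras_chiMul (f : L2Space N) :
    ‖f‖ ^ 2 = ‖chiMul hD f‖ ^ 2 + ‖chiMul hD.compl f‖ ^ 2 := by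
  have horth : ⟪chiMul hD f, chiMul hD.compl f⟫_ℂ = 0 := by
    rw [MeasureTheory.L2.inner_def]
    rw [show (0 : ℂ) = ∫ _a : EuclideanSpace ℝ (Fin N), (0:ℂ) ∂volume by simp]
    apply integral_congr_ae
    filter_upwards [coeFn_chiMul hD f, coeFn_chiMul hD.compl f] with a h1 h2
    rw [h1, h2]
    by_cases ha : a ∈ D
    · simp [Set.indicator_of_notMem (show a ∉ Dᶜ by simp [ha])]
    · simp [Set.indicator_of_notMem ha]
  have := norm_add_sq (𝕜 := ℂ) (chiMul hD f) (chiMul hD.compl f)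
  rw [chiMul_add_compl hD f] at this
  rw [this, horth]
  simp

end Aux

/-- For `h ∈ B_S` and `D` a bounded measurable set with nonempty interior,
the iterates `f_0 = P_S(χ_D h)`, `f_{k+1} = T_h^{(D)} f_k` converge strongly to `h`:
`‖f_k − h‖ → 0`. -/
theorem iterates_tendsto_single (N : ℕ) (hN : 1 ≤ N)
    (S : Set (EuclideanSpace ℝ (Fin N))) (hS : IsCompact S)
    (K : Submodule ℂ (L2Space N))
    (hKset : (K : Set (L2Space N)) = {f : L2Space N | IsBandlimited S f})
    (hK : IsClosed (K : Set (L2Space N)))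
    (h : L2Space N) (hh : IsBandlimited S h)
    (D : Set (EuclideanSpace ℝ (Fin N))) (hD : MeasurableSet D)
    (hDbdd : Bornology.IsBounded D) (hDint : (interior D).Nonempty)
    (f : ℕ → L2Space N) (hf0 : f 0 = projOf K hK (chiMul hD h))
    (hfrec : ∀ k : ℕ, f (k + 1) = Tsingle K hK hD h (f k)) :
    Tendsto (fun k => ‖f k - h‖) atTop (nhds 0) := by
  haveI : CompleteSpace K := hK.completeSpace_coe
  have hproj : ∀ u : L2Space N, projOf K hK u = ((K.orthogonalProjectionOnto u : K) : L2Space N) :=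
    fun u => rfl
  have hhK : h ∈ K := by
    have h1 : h ∈ (K : Set (L2Space N)) := by rw [hKset]; exact hh
    exact h1
  have hPmem : ∀ u : L2Space N, projOf K hK u ∈ K := fun u => by
    rw [hproj]; exact SetLike.coe_mem _
  have hPinner : ∀ (z w : L2Space N), w ∈ K → ⟪projOf K hK z, w⟫_ℂ = ⟪z, w⟫_ℂ := by
    intro z w hw
    have h1 : z - projOf K hK z ∈ Kᗮ := by
      rw [hproj]; exact Submodule.sub_starProjection_mem_orthogonal (K := K) z
    have h2 : ⟪w, z - projOf K hK z⟫_ℂ = 0 := (Submodule.mem_orthogonal K _).mp h1 w hw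
    have h3 : ⟪z - projOf K hK z, w⟫_ℂ = 0 := by
      rw [← inner_conj_symm, h2, map_zero]
    rw [inner_sub_left] at h3
    exact (sub_eq_zero.mp h3).symm
  have hPh : projOf K hK h = h := by
    rw [hproj]; exact Submodule.starProjection_eq_self_iff.mpr hhK
  have hPnorm : ∀ z : L2Space N, ‖projOf K hK z‖ ≤ ‖z‖ := by
    intro z
    have h1 : ‖projOf K hK z‖ ^ 2 = RCLike.re ⟪projOf K hK z, projOf K hK z⟫_ℂ :=
      norm_sq_eq_re_inner (𝕜 := ℂ) _
    rw [hPinner z _ (hPmem z)] at h1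
    have h2 : ‖projOf K hK z‖ ^ 2 ≤ ‖projOf K hK z‖ * ‖z‖ := by
      rw [h1]
      calc RCLike.re ⟪z, projOf K hK z⟫_ℂ ≤ ‖⟪z, projOf K hK z⟫_ℂ‖ := RCLike.re_le_norm _
      _ ≤ ‖z‖ * ‖projOf K hK z‖ := norm_inner_le_norm _ _
      _ = ‖projOf K hK z‖ * ‖z‖ := mul_comm _ _
    rcases eq_or_lt_of_le (norm_nonneg (projOf K hK z)) with h4 | h4
    · rw [← h4]; exact norm_nonneg z
    · nlinarith [h2]
  have hPadd : ∀ a b : L2Space N, projOf K hK (a + b) = projOf K hK a + projOf K hK b := by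
    intro a b
    simp only [hproj, map_add, Submodule.coe_add]
  -- the iterates lie in K
  have hfK : ∀ n, f n ∈ K := by
    intro n
    cases n with
    | zero => rw [hf0]; exact hPmem _
    | succ k => rw [hfrec k]; unfold Tsingle; exact hPmem _
  set x : ℕ → L2Space N := fun n => f n - h with hxdef
  have hxK : ∀ n, x n ∈ K := fun n => K.sub_mem (hfK n) hhK
  -- the recursion for the error sequence
  have hstep : ∀ n, x (n + 1) = projOf K hK (chiMul hD.compl (x n)) := by
    intro n
    have key : f n + chiMul hD (h - f n) = h + chiMul hD.compl (f n - h) := by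
      rw [chiMul_sub hD h (f n), chiMul_sub hD.compl (f n) h]
      have e1 := chiMul_add_compl hD (f n)
      have e2 := chiMul_add_compl hD h
      set a1 := chiMul hD (f n)
      set a2 := chiMul hD.compl (f n)
      set a3 := chiMul hD h
      set a4 := chiMul hD.compl h
      rw [← e1, ← e2]
      abel
    show f (n + 1) - h = _
    rw [hfrec n]
    unfold Tsingle
    rw [key, hPadd, hPh]
    abel
  -- inner product identities
  have hMxinner : ∀ n, ⟪x (n+1), x n⟫_ℂ
      = ⟪chiMul hD.compl (x n), chiMul hD.compl (x n)⟫_ℂ := by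
    intro n
    rw [hstep n, hPinner _ _ (hxK n), inner_chiMul_left]
  have hsym : ∀ n m, ⟪x (n+1), x m⟫_ℂ = ⟪x n, x (m+1)⟫_ℂ := by
    intro n m
    have l1 : ⟪x (n+1), x m⟫_ℂ = ⟪chiMul hD.compl (x n), chiMul hD.compl (x m)⟫_ℂ := by
      rw [hstep n, hPinner _ _ (hxK m), inner_chiMul_left]
    have l2 : ⟪x (m+1), x n⟫_ℂ = ⟪chiMul hD.compl (x m), chiMul hD.compl (x n)⟫_ℂ := by
      rw [hstep m, hPinner _ _ (hxK n), inner_chiMul_left]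
    calc ⟪x (n+1), x m⟫_ℂ = ⟪chiMul hD.compl (x n), chiMul hD.compl (x m)⟫_ℂ := l1
    _ = (starRingEnd ℂ) ⟪chiMul hD.compl (x m), chiMul hD.compl (x n)⟫_ℂ :=
        (inner_conj_symm _ _).symm
    _ = (starRingEnd ℂ) ⟪x (m+1), x n⟫_ℂ := by rw [l2]
    _ = ⟪x n, x (m+1)⟫_ℂ := inner_conj_symm _ _
  have hdec : ∀ n, ‖x (n+1)‖ ≤ ‖x n‖ := by
    intro n
    rw [hstep n]
    exact le_trans (hPnorm _) (norm_chiMul_le _ _)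
  have hnormM : ∀ n, ‖x (n+1)‖ ≤ ‖chiMul hD.compl (x n)‖ := by
    intro n
    rw [hstep n]
    exact hPnorm _
  have hquad : ∀ n, ‖x (n+1)‖ ^ 2 ≤ RCLike.re ⟪x (n+1), x n⟫_ℂ := by
    intro n
    rw [hMxinner n, inner_self_eq_norm_sq (𝕜 := ℂ)]
    have := hnormM n
    nlinarith [norm_nonneg (x (n+1))]
  -- convergence of the error sequence
  obtain ⟨y, hy⟩ := cauchySeq_tendsto_of_complete (iter_cauchySeq x hsym hdec hquad)
  have hyK : y ∈ K := hK.mem_of_tendsto hy (Eventually.of_forall fun n => hxK n)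
  -- the limit vanishes on D
  have hb : Tendsto (fun n => ‖x n‖ ^ 2) atTop (nhds (‖y‖ ^ 2)) :=
    ((continuous_norm.tendsto y).comp hy).pow 2
  have hx1 : Tendsto (fun n => x (n+1)) atTop (nhds y) := hy.comp (tendsto_add_atTop_nat 1)
  have hinner : Tendsto (fun n => RCLike.re ⟪x (n+1), x n⟫_ℂ) atTop
      (nhds (RCLike.re ⟪y, y⟫_ℂ)) :=
    (RCLike.continuous_re.tendsto _).comp (hx1.inner hy)
  have hMnorm : Tendsto (fun n => ‖chiMul hD (x n)‖ ^ 2) atTop (nhds 0) := by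
    have heq : ∀ n, ‖chiMul hD (x n)‖ ^ 2 = ‖x n‖ ^ 2 - RCLike.re ⟪x (n+1), x n⟫_ℂ := by
      intro n
      rw [hMxinner n, inner_self_eq_norm_sq (𝕜 := ℂ)]
      have := pythagoras_chiMul hD (x n)
      linarith
    have h2 : Tendsto (fun n => ‖x n‖ ^ 2 - RCLike.re ⟪x (n+1), x n⟫_ℂ) atTop
        (nhds (‖y‖ ^ 2 - RCLike.re ⟪y, y⟫_ℂ)) := hb.sub hinner
    rw [inner_self_eq_norm_sq (𝕜 := ℂ), sub_self] at h2
    exact h2.congr fun n => (heq n).symm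
  have hMy : chiMul hD y = 0 := by
    have hlip : Tendsto (fun n => chiMul hD (x n)) atTop (nhds (chiMul hD y)) := by
      rw [tendsto_iff_norm_sub_tendsto_zero]
      have hb2 : Tendsto (fun n => ‖x n - y‖) atTop (nhds 0) :=
        tendsto_iff_norm_sub_tendsto_zero.mp hy
      refine squeeze_zero (fun n => norm_nonneg _) (fun n => ?_) hb2
      rw [← chiMul_sub hD]
      exact norm_chiMul_le hD _
    have h3 : Tendsto (fun n => ‖chiMul hD (x n)‖ ^ 2) atTop
        (nhds (‖chiMul hD y‖ ^ 2)) := ((continuous_norm.tendsto _).comp hlip).pow 2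
    have h4 : ‖chiMul hD y‖ ^ 2 = 0 := tendsto_nhds_unique h3 hMnorm
    have h5 : ‖chiMul hD y‖ = 0 := by nlinarith [norm_nonneg (chiMul hD y)]
    exact norm_eq_zero.mp h5
  -- the limit is bandlimited and vanishes a.e. on D
  have hyBL : IsBandlimited S y := by
    have h1 : y ∈ (K : Set (L2Space N)) := hyK
    rwa [hKset] at h1
  obtain ⟨Fy, hFyInt, hFysupp, hFyae⟩ := hyBL
  have hyD0 : ∀ᵐ a ∂(volume : Measure (EuclideanSpace ℝ (Fin N))),
      a ∈ D → 𝓕⁻ Fy a = 0 := by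
    have h1 : (chiMul hD y : EuclideanSpace ℝ (Fin N) → ℂ) =ᵐ[volume] D.indicator y :=
      coeFn_chiMul hD y
    rw [hMy] at h1
    filter_upwards [h1.symm, Lp.coeFn_zero ℂ 2 (volume : Measure (EuclideanSpace ℝ (Fin N))),
      hFyae] with a ha hz hFa
    intro haD
    have h2 : D.indicator (y : EuclideanSpace ℝ (Fin N) → ℂ) a = 0 := by
      rw [ha, hz]; rfl
    rw [Set.indicator_of_mem haD] at h2
    rw [← hFa]
    exact h2
  -- continuity of the inverse Fourier transform
  have hgcont : Continuous (𝓕⁻ Fy) := by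
    apply VectorFourier.fourierIntegral_continuous Real.continuous_fourierChar
      (f := Fy) ?_ hFyInt
    simp only [LinearMap.neg_apply, innerₗ_apply_apply]
    exact continuous_inner.neg
  -- it vanishes on a ball inside D
  obtain ⟨x₀, hx₀⟩ := hDint
  obtain ⟨r, hr, hball⟩ := Metric.isOpen_iff.mp isOpen_interior x₀ hx₀
  have hzero : ∀ xx ∈ Metric.ball x₀ r, 𝓕⁻ Fy xx = 0 := by
    by_contra hcon
    push_neg at hcon
    obtain ⟨xx, hxx, hne⟩ := hcon
    set U := Metric.ball x₀ r ∩ {a | 𝓕⁻ Fy a ≠ 0} with hU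
    have hUopen : IsOpen U :=
      Metric.isOpen_ball.inter ((isClosed_eq hgcont continuous_const).isOpen_compl)
    have hUne : U.Nonempty := ⟨xx, hxx, hne⟩
    have hpos : 0 < volume U := hUopen.measure_pos volume hUne
    have hnull : volume {a | a ∈ D ∧ ¬ 𝓕⁻ Fy a = 0} = 0 := by
      have h6 := ae_iff.mp hyD0
      simpa only [Classical.not_imp] using h6
    have hsub : U ⊆ {a | a ∈ D ∧ ¬ 𝓕⁻ Fy a = 0} := by
      rintro a ⟨ha1, ha2⟩
      exact ⟨interior_subset (hball ha1), ha2⟩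
    exact absurd (measure_mono_null hsub hnull) (ne_of_gt hpos)
  have hall := fourierInv_vanish_everywhere hS hFyInt hFysupp hr hzero
  have hy0 : y = 0 :=
    Lp.eq_zero_iff_ae_eq_zero.mpr (hFyae.trans (Eventually.of_forall fun a => hall a))
  rw [hy0] at hy
  have hfinal : Tendsto (fun k => ‖x k‖) atTop (nhds 0) := by
    have := (continuous_norm.tendsto (0 : L2Space N)).comp hy
    simpa [Function.comp_def] using this
  exact hfinal
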